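/- The refinement relation on integer partitions of n, defined by ῡ ≼ ξ̄ iff there exist set partitions υ, ξ of {1,…,n} with block-size multisets ῡ and ξ̄ respectively such that υ refines ξ, is a partial order on the set of integer partitions of n. -/

import Mathlib

set_option linter.unusedSectionVars false

open Finset in
/-- The type of a set partition of `Fin n`: the multiset of its block sizes. -/
def ptype {n : ℕ} (ξ : Finpartition (univ : Finset (Fin n))) : Multiset ℕ :=
  ξ.parts.val.map Finset.card

open Finset in
/-- Refinement of set partitions: every block of `υ` is contained in a block of `ξ`. -/
def srefines {n : ℕ} (υ ξ : Finpartition (univ : Finset (Fin n))) : Prop :=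
  ∀ Y ∈ υ.parts, ∃ X ∈ ξ.parts, Y ⊆ X

open Finset in
/-- Refinement relation on integer partitions of `n`, via set-partition representatives. -/
def irefines {n : ℕ} (υb ξb : n.Partition) : Prop :=
  ∃ υ ξ : Finpartition (univ : Finset (Fin n)),
    ptype υ = υb.parts ∧ ptype ξ = ξb.parts ∧ srefines υ ξ

/-- Height: number of parts. -/
def pheight {n : ℕ} (ξb : n.Partition) : ℕ := Multiset.card ξb.parts

/-- Width: largest part. -/
def pwidth {n : ℕ} (ξb : n.Partition) : ℕ := ξb.parts.sup

/-- Rank: width minus height. -/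
def prank {n : ℕ} (ξb : n.Partition) : ℤ := (pwidth ξb : ℤ) - (pheight ξb : ℤ)

/-- Conjugate of a multiset of part sizes: the `i`-th part is the number of parts `≥ i`. -/
def conjParts (p : Multiset ℕ) : Multiset ℕ :=
  (Multiset.range p.sup).map (fun i => Multiset.card (p.filter (fun x => i + 1 ≤ x)))

namespace IrefinesAux

open Finset

variable {α : Type*} [DecidableEq α] {s : Finset α}

lemma card_finset_sum {γ β : Type*} (t : Finset γ) (f : γ → Multiset β) :
    Multiset.card (∑ x ∈ t, f x) = ∑ x ∈ t, Multiset.card (f x) := by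
  classical
  induction t using Finset.induction with
  | empty => simp
  | insert _ _ h ih => simp [Finset.sum_insert h, ih]

lemma map_finset_sum {γ β δ : Type*} (t : Finset γ) (f : γ → Multiset β) (g : β → δ) :
    (∑ x ∈ t, f x).map g = ∑ x ∈ t, (f x).map g := by
  classical
  induction t using Finset.induction with
  | empty => simp
  | insert _ _ h ih => simp [Finset.sum_insert h, ih]

lemma ofSizes (m : Multiset ℕ) :
    ∀ s : Finset α, 0 ∉ m → m.sum = s.card →
    ∃ P : Finpartition s, P.parts.val.map Finset.card = m := by
  induction m using Multiset.induction with
  | empty =>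
    intro s _ hsum
    have : s = ∅ := by
      rw [← Finset.card_eq_zero]; simpa using hsum.symm
    subst this
    exact ⟨Finpartition.empty _, rfl⟩
  | cons a t ih =>
    intro s h0 hsum
    have ha : a ≠ 0 := fun h => h0 (by simp [h])
    simp only [Multiset.sum_cons] at hsum
    obtain ⟨u, hus, hcard⟩ := s.exists_subset_card_eq (le_trans (Nat.le_add_right _ _) hsum.le)
    have ht0 : 0 ∉ t := fun h => h0 (Multiset.mem_cons_of_mem h)
    have hcards : t.sum = (s \ u).card := by
      rw [Finset.card_sdiff_of_subset hus, hcard]; omega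
    obtain ⟨P, hP⟩ := ih (s \ u) ht0 hcards
    have hbne : u ≠ (⊥ : Finset α) := by
      intro h; apply ha; rw [← hcard, h]; simp
    have hdisj : Disjoint (s \ u) u := Finset.sdiff_disjoint
    have hsup : (s \ u) ⊔ u = s := by
      simpa using Finset.sdiff_union_of_subset hus
    refine ⟨P.extend hbne hdisj hsup, ?_⟩
    have hu : u ∉ P.parts := by
      intro h
      exact hbne (hdisj.symm.eq_bot_of_le (P.le h))
    rw [Finpartition.extend_parts, Finset.insert_val, Multiset.ndinsert_of_notMem hu,
      Multiset.map_cons, hP, hcard]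

lemma unique_part (ξ : Finpartition s) {X X' Y : Finset α} (hX : X ∈ ξ.parts)
    (hX' : X' ∈ ξ.parts) (hY : Y.Nonempty) (h1 : Y ⊆ X) (h2 : Y ⊆ X') : X = X' := by
  by_contra hne
  have h3 : Y ≤ ⊥ := le_trans (le_inf h1 h2) (ξ.disjoint hX hX' hne).le_bot
  exact hY.ne_empty (Finset.bot_eq_empty ▸ le_bot_iff.mp h3)

lemma exists_part_subset (υ ξ : Finpartition s)
    (href : ∀ Y ∈ υ.parts, ∃ X ∈ ξ.parts, Y ⊆ X) {X : Finset α} (hX : X ∈ ξ.parts)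
    {x : α} (hx : x ∈ X) : ∃ Y ∈ υ.parts, Y ⊆ X ∧ x ∈ Y := by
  have hxs : x ∈ s := ξ.le hX hx
  have hp := υ.part_mem.mpr hxs
  have hm := υ.mem_part hxs
  obtain ⟨X', hX', hYX'⟩ := href _ hp
  have : X = X' := unique_part ξ hX hX' (Finset.singleton_nonempty x)
    (Finset.singleton_subset_iff.mpr hx) (Finset.singleton_subset_iff.mpr (hYX' hm))
  subst this
  exact ⟨_, hp, hYX', hm⟩

lemma biUnion_filter_subset (υ ξ : Finpartition s)
    (href : ∀ Y ∈ υ.parts, ∃ X ∈ ξ.parts, Y ⊆ X) {X : Finset α} (hX : X ∈ ξ.parts) :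
    (υ.parts.filter (· ⊆ X)).biUnion id = X := by
  apply Finset.Subset.antisymm
  · intro x hx
    simp only [Finset.mem_biUnion, Finset.mem_filter, id] at hx
    obtain ⟨Y, ⟨_, hYX⟩, hxY⟩ := hx
    exact hYX hxY
  · intro x hx
    obtain ⟨Y, hY, hYX, hxY⟩ := exists_part_subset υ ξ href hX hx
    simp only [Finset.mem_biUnion, Finset.mem_filter, id]
    exact ⟨_, ⟨hY, hYX⟩, hxY⟩

lemma card_filter_subset (υ ξ : Finpartition s)
    (href : ∀ Y ∈ υ.parts, ∃ X ∈ ξ.parts, Y ⊆ X) {X : Finset α} (hX : X ∈ ξ.parts) :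
    ∑ Y ∈ υ.parts.filter (· ⊆ X), Y.card = X.card := by
  have hd : ∀ Y ∈ υ.parts.filter (· ⊆ X), ∀ Z ∈ υ.parts.filter (· ⊆ X), Y ≠ Z →
      Disjoint (id Y) (id Z) := fun Y hY Z hZ hne =>
    υ.disjoint (Finset.mem_filter.mp hY).1 (Finset.mem_filter.mp hZ).1 hne
  have h := Finset.card_biUnion hd
  rw [biUnion_filter_subset υ ξ href hX] at h
  simpa using h.symm

lemma parts_val_decomp (υ ξ : Finpartition s)
    (href : ∀ Y ∈ υ.parts, ∃ X ∈ ξ.parts, Y ⊆ X) :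
    ∑ X ∈ ξ.parts, (υ.parts.val.filter (· ⊆ X)) = υ.parts.val := by
  ext Y
  rw [Multiset.count_sum']
  by_cases hY : Y ∈ υ.parts
  · obtain ⟨X₀, hX₀, hYX₀⟩ := href Y hY
    have hYne : Y.Nonempty := υ.nonempty_of_mem_parts hY
    rw [Finset.sum_eq_single_of_mem X₀ hX₀ ?h]
    · rw [Multiset.count_filter, if_pos hYX₀]
    case h =>
      intro X hX hne
      have hnsub : ¬ Y ⊆ X := fun hYX => hne (unique_part ξ hX hX₀ hYne hYX hYX₀)
      rw [Multiset.count_filter, if_neg hnsub]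
  · have h0 : υ.parts.val.count Y = 0 := by
      rwa [Multiset.count_eq_zero, ← Finset.mem_def]
    rw [h0]
    apply Finset.sum_eq_zero
    intro X _
    simp [Multiset.count_filter, h0]

lemma exists_fun_of_map_eq {β : Type*} [DecidableEq β] [Inhabited α]
    (f : α → ℕ) (g : β → ℕ) :
    ∀ (t : Finset β) (s : Multiset α), s.map f = t.val.map g →
    ∃ φ : β → α, t.val.map φ = s ∧ ∀ y ∈ t, f (φ y) = g y := by
  intro t
  induction t using Finset.induction with
  | empty =>
    intro s h
    simp only [Finset.empty_val, Multiset.map_zero] at h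
    refine ⟨fun _ => default, ?_, by simp⟩
    simp [Multiset.map_eq_zero.mp h]
  | @insert y t hyt ih =>
    intro s h
    rw [Finset.insert_val, Multiset.ndinsert_of_notMem hyt, Multiset.map_cons] at h
    have hmem : g y ∈ s.map f := by rw [h]; exact Multiset.mem_cons_self _ _
    obtain ⟨x, hxs, hfx⟩ := Multiset.mem_map.mp hmem
    obtain ⟨s', rfl⟩ := Multiset.exists_cons_of_mem hxs
    rw [Multiset.map_cons, hfx] at h
    have h' : s'.map f = t.val.map g := (Multiset.cons_inj_right _).mp h
    obtain ⟨φ', hφ'1, hφ'2⟩ := ih s' h'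
    refine ⟨fun z => if z = y then x else φ' z, ?_, ?_⟩
    · rw [Finset.insert_val, Multiset.ndinsert_of_notMem hyt, Multiset.map_cons]
      simp only [if_pos rfl]
      congr 1
      rw [← hφ'1]
      apply Multiset.map_congr rfl
      intro z hz
      show (if z = y then x else φ' z) = φ' z
      rw [if_neg]; rintro rfl; exact hyt hz
    · intro z hz
      rcases Finset.mem_insert.mp hz with rfl | hz'
      · simpa using hfx
      · have hzy : z ≠ y := by rintro rfl; exact hyt hz'
        simp only [if_neg hzy]
        exact hφ'2 z hz'

lemma biUnion_val_eq_sum {β : Type*} [DecidableEq β] (t : Finset α) (f : α → Finset β)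
    (h : ∀ x ∈ t, ∀ y ∈ t, x ≠ y → Disjoint (f x) (f y)) :
    (t.biUnion f).val = ∑ x ∈ t, (f x).val := by
  classical
  rw [← Finset.disjiUnion_eq_biUnion t f (show (t : Set α).PairwiseDisjoint f from fun x hx y hy hxy => h x hx y hy hxy), Finset.disjiUnion_val]
  rw [Finset.sum_eq_multiset_sum]
  simp [Multiset.bind, Multiset.join]

lemma bind_parts_val (P : Finpartition s) (Q : ∀ i ∈ P.parts, Finpartition i) :
    (P.bind Q).parts.val = ∑ A ∈ P.parts.attach, (Q A.1 A.2).parts.val := by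
  apply biUnion_val_eq_sum
  rintro ⟨b, hb⟩ - ⟨c, hc⟩ - hbc
  rw [Finset.disjoint_left]
  rintro d hdb hdc
  rw [Ne, Subtype.mk_eq_mk] at hbc
  exact (Q b hb).ne_bot hdb
    (eq_bot_iff.2 <| (le_inf ((Q b hb).le hdb) <| (Q c hc).le hdc).trans <|
      (P.disjoint hb hc hbc).le_bot)

lemma parts_card_le (υ ξ : Finpartition s)
    (href : ∀ Y ∈ υ.parts, ∃ X ∈ ξ.parts, Y ⊆ X) :
    ξ.parts.card ≤ υ.parts.card ∧
    (υ.parts.card ≤ ξ.parts.card → υ.parts = ξ.parts) := by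
  have hdecomp := parts_val_decomp υ ξ href
  have hcards : ∑ X ∈ ξ.parts, (υ.parts.filter (· ⊆ X)).card = υ.parts.card := by
    have := congrArg Multiset.card hdecomp
    rw [card_finset_sum] at this
    rw [Finset.card_def, ← this]
    apply Finset.sum_congr rfl
    intro X _
    rw [Finset.card_def, Finset.filter_val]
  have hone : ∀ X ∈ ξ.parts, 1 ≤ (υ.parts.filter (· ⊆ X)).card := by
    intro X hX
    obtain ⟨x, hx⟩ := ξ.nonempty_of_mem_parts hX
    obtain ⟨Y, hY, hYX, _⟩ := exists_part_subset υ ξ href hX hx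
    exact Finset.card_pos.mpr ⟨Y, Finset.mem_filter.mpr ⟨hY, hYX⟩⟩
  constructor
  · calc ξ.parts.card = ∑ X ∈ ξ.parts, 1 := by simp
    _ ≤ ∑ X ∈ ξ.parts, (υ.parts.filter (· ⊆ X)).card := Finset.sum_le_sum hone
    _ = υ.parts.card := hcards
  · intro hle
    have hall : ∀ X ∈ ξ.parts, (υ.parts.filter (· ⊆ X)).card = 1 := by
      by_contra hcon
      push_neg at hcon
      obtain ⟨X₀, hX₀, hne⟩ := hcon
      have hlt : ∑ X ∈ ξ.parts, 1 < ∑ X ∈ ξ.parts, (υ.parts.filter (· ⊆ X)).card :=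
        Finset.sum_lt_sum hone ⟨X₀, hX₀, lt_of_le_of_ne (hone X₀ hX₀) (Ne.symm hne)⟩
      rw [hcards] at hlt
      simp only [Finset.sum_const, smul_eq_mul, mul_one] at hlt
      omega
    have hsub : ξ.parts ⊆ υ.parts := by
      intro X hX
      obtain ⟨Y, hYeq⟩ := Finset.card_eq_one.mp (hall X hX)
      have hXY : X = Y := by
        have := biUnion_filter_subset υ ξ href hX
        rw [hYeq] at this
        simpa using this.symm
      have : Y ∈ υ.parts.filter (· ⊆ X) := hYeq ▸ Finset.mem_singleton_self Y
      rw [hXY]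
      exact (Finset.mem_filter.mp this).1
    exact (Finset.eq_of_subset_of_card_le hsub hle).symm

end IrefinesAux

open Finset IrefinesAux in
/-- The refinement relation on integer partitions of `n` is a
partial order. -/
theorem irefines_isPartialOrder (n : ℕ) :
    IsPartialOrder (n.Partition) irefines := by
  refine { refl := ?refl, trans := ?trans, antisymm := ?antisymm }
  case refl =>
    intro p
    have hsum : p.parts.sum = (univ : Finset (Fin n)).card := by
      simp [p.parts_sum]
    have h0 : 0 ∉ p.parts := fun h => (lt_irrefl 0 (p.parts_pos h)).elim
    obtain ⟨P, hP⟩ := ofSizes p.parts univ h0 hsum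
    exact ⟨P, P, hP, hP, fun Y hY => ⟨Y, hY, subset_rfl⟩⟩
  case trans =>
    rintro a b c ⟨υ, ξ, hυ, hξ, href⟩ ⟨υ', ξ', hυ', hξ', href'⟩
    have hkey : ξ.parts.val.map Finset.card = υ'.parts.val.map Finset.card := by
      rw [show ξ.parts.val.map Finset.card = ptype ξ from rfl,
        show υ'.parts.val.map Finset.card = ptype υ' from rfl, hξ, hυ']
    obtain ⟨φ, hφ1, hφ2⟩ := exists_fun_of_map_eq Finset.card Finset.card υ'.parts
      ξ.parts.val hkey
    have hφmem : ∀ Y ∈ υ'.parts, φ Y ∈ ξ.parts := by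
      intro Y hY
      have : φ Y ∈ υ'.parts.val.map φ := Multiset.mem_map_of_mem φ hY
      rw [hφ1] at this
      exact this
    -- refine each part of υ' using the sizes of υ-parts inside φ Y
    have hex : ∀ Y (hY : Y ∈ υ'.parts),
        ∃ P : Finpartition Y,
          P.parts.val.map Finset.card = (υ.parts.val.filter (· ⊆ φ Y)).map Finset.card := by
      intro Y hY
      apply ofSizes
      · intro h0
        obtain ⟨Z, hZ, hZ0⟩ := Multiset.mem_map.mp h0
        have hZp : Z ∈ υ.parts := Multiset.mem_filter.mp hZ |>.1
        exact (υ.nonempty_of_mem_parts hZp).ne_empty (Finset.card_eq_zero.mp hZ0)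
      · calc ((υ.parts.val.filter (· ⊆ φ Y)).map Finset.card).sum
            = ∑ Z ∈ υ.parts.filter (· ⊆ φ Y), Z.card := by
              rw [Finset.sum_eq_multiset_sum, Finset.filter_val]
          _ = (φ Y).card := card_filter_subset υ ξ href (hφmem Y hY)
          _ = Y.card := hφ2 Y hY
    choose R hR using hex
    refine ⟨υ'.bind R, ξ', ?_, hξ', ?_⟩
    · show (υ'.bind R).parts.val.map Finset.card = a.parts
      rw [bind_parts_val, map_finset_sum]
      calc ∑ A ∈ υ'.parts.attach, ((R A.1 A.2).parts.val.map Finset.card)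
          = ∑ A ∈ υ'.parts.attach, (υ.parts.val.filter (· ⊆ φ A.1)).map Finset.card := by
            exact Finset.sum_congr rfl fun A _ => hR A.1 A.2
        _ = ∑ Y ∈ υ'.parts, (υ.parts.val.filter (· ⊆ φ Y)).map Finset.card :=
            Finset.sum_attach υ'.parts (fun Y => (υ.parts.val.filter (· ⊆ φ Y)).map Finset.card)
        _ = ∑ X ∈ ξ.parts, (υ.parts.val.filter (· ⊆ X)).map Finset.card := by
            rw [Finset.sum_eq_multiset_sum, Finset.sum_eq_multiset_sum, ← hφ1,
              Multiset.map_map]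
            rfl
        _ = ((∑ X ∈ ξ.parts, υ.parts.val.filter (· ⊆ X)).map Finset.card) := by
            rw [map_finset_sum]
        _ = υ.parts.val.map Finset.card := by rw [parts_val_decomp υ ξ href]
        _ = a.parts := hυ
    · intro B hB
      obtain ⟨Y, hY, hBY⟩ := Finpartition.mem_bind.mp hB
      obtain ⟨X'', hX'', hYX''⟩ := href' Y hY
      exact ⟨X'', hX'', le_trans ((R Y hY).le hBY) hYX''⟩
  case antisymm =>
    rintro a b ⟨υ, ξ, hυ, hξ, href⟩ ⟨υ', ξ', hυ', hξ', href'⟩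
    have hca : Multiset.card a.parts = υ.parts.card := by
      rw [← hυ]; simp [ptype]
    have hcb : Multiset.card b.parts = ξ.parts.card := by
      rw [← hξ]; simp [ptype]
    have hca' : Multiset.card b.parts = υ'.parts.card := by
      rw [← hυ']; simp [ptype]
    have hcb' : Multiset.card a.parts = ξ'.parts.card := by
      rw [← hξ']; simp [ptype]
    have h1 := (parts_card_le υ ξ href).1
    have h2 := (parts_card_le υ' ξ' href').1
    have heq : υ.parts = ξ.parts := by
      apply (parts_card_le υ ξ href).2
      omega
    have : a.parts = b.parts := by
      rw [← hυ, ← hξ, ptype, ptype, heq]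
    exact Nat.Partition.ext this
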